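/- Define φ_n^{(α,β)}(μ) := Σ_{k=0}^{[n/2]} [(d/dx)^{2k} P_n^{(α,β)}(x)]|_{x=1} · μ^k. Then (n+α)·φ_{n−1}^{(α,β+1)}(μ) = n·φ_n^{(α,β)}(μ) − 2μ·(d/dμ)φ_n^{(α,β)}(μ). -/

import Mathlib

open Polynomial

/-- The Jacobi polynomial `P_n^{(α,β)}` as a real polynomial in `x`. -/
noncomputable def jacobiP (α β : ℝ) (n : ℕ) : Polynomial ℝ :=
  C ((ascPochhammer ℝ n).eval (α + 1) / (n.factorial : ℝ)) *
    ∑ k ∈ Finset.range (n + 1),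
      C ((ascPochhammer ℝ k).eval (-(n : ℝ)) * (ascPochhammer ℝ k).eval ((n : ℝ) + α + β + 1) /
          ((k.factorial : ℝ) * (ascPochhammer ℝ k).eval (α + 1))) *
        (C (1 / 2 : ℝ) * (1 - X)) ^ k

/-- `φ_n^{(α,β)}(μ) = Σ_{k=0}^{[n/2]} (d/dx)^{2k} P_n^{(α,β)}(x)|_{x=1} · μ^k`. -/
noncomputable def phi (α β : ℝ) (n : ℕ) : Polynomial ℝ :=
  ∑ k ∈ Finset.range (n / 2 + 1),
    C ((Polynomial.derivative^[2 * k] (jacobiP α β n)).eval 1) * X ^ k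

section PhiAux
open Finset

noncomputable def Bc (α β : ℝ) (n j : ℕ) : ℝ :=
  (ascPochhammer ℝ j).eval (-(n : ℝ)) * (ascPochhammer ℝ j).eval ((n : ℝ) + α + β + 1) /
          ((j.factorial : ℝ) * (ascPochhammer ℝ j).eval (α + 1))

noncomputable def cc (α β : ℝ) (n k : ℕ) : ℝ :=
  ((2*k).factorial : ℝ) * ((ascPochhammer ℝ n).eval (α + 1) / (n.factorial : ℝ)) *
    Bc α β n (2*k) * (1/2:ℝ)^(2*k)

lemma jacobi_comp (α β : ℝ) (n : ℕ) :
    (jacobiP α β n).comp (1 - X) =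
      ∑ j ∈ Finset.range (n + 1),
        C (((ascPochhammer ℝ n).eval (α + 1) / (n.factorial : ℝ)) * Bc α β n j * (1/2:ℝ)^j) * X^j := by
  rw [jacobiP, mul_comp, Polynomial.sum_comp]
  rw [C_comp, Finset.mul_sum]
  refine Finset.sum_congr rfl fun j _ => ?_
  rw [mul_comp, pow_comp, mul_comp, C_comp, sub_comp, one_comp, X_comp, Bc]
  have h1 : (1:ℝ[X]) - (1 - X) = X := by ring
  simp only [h1, mul_pow, C_comp, ← C_pow]
  rw [C_mul, C_mul]
  ring

lemma sum_coeff (N : ℕ) (f : ℕ → ℝ) (m : ℕ) :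
    (∑ k ∈ Finset.range N, C (f k) * X^k).coeff m = if m < N then f m else 0 := by
  rw [finset_sum_coeff]
  simp only [coeff_C_mul, coeff_X_pow, mul_ite, mul_one, mul_zero]
  rw [Finset.sum_ite_eq (Finset.range N) m f]
  simp [Finset.mem_range]

lemma eval_one_iterate (α β : ℝ) (n k : ℕ) (h : 2*k ≤ n) :
    (Polynomial.derivative^[2*k] (jacobiP α β n)).eval 1 = cc α β n k := by
  have h1 : (Polynomial.derivative^[2*k] ((jacobiP α β n).comp (1 - X))).eval 0
      = (Polynomial.derivative^[2*k] (jacobiP α β n)).eval 1 := by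
    rw [iterate_derivative_comp_one_sub_X]
    simp [eval_comp, pow_mul]
  rw [← h1, ← coeff_zero_eq_eval_zero, coeff_iterate_derivative, jacobi_comp, sum_coeff]
  have h2 : 2*k < n + 1 := by omega
  simp only [h2, if_true, zero_add, Nat.descFactorial_self, nsmul_eq_mul, cc]
  ring

lemma phi_eq (α β : ℝ) (n : ℕ) :
    phi α β n = ∑ k ∈ Finset.range (n / 2 + 1), C (cc α β n k) * X^k := by
  refine Finset.sum_congr rfl fun k hk => ?_
  rw [eval_one_iterate α β n k (by rw [Finset.mem_range] at hk; omega)]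

lemma poch_shift (N k : ℕ) :
    ((N:ℝ)+1) * (ascPochhammer ℝ (2*k)).eval (-(N:ℝ)) =
      ((N:ℝ)+1-2*k) * (ascPochhammer ℝ (2*k)).eval (-((N:ℝ)+1)) := by
  cases k with
  | zero => simp
  | succ j =>
    have e1 : 2*(j+1) = (2*j+1) + 1 := by ring
    have hL : (ascPochhammer ℝ (2*j+1+1)).eval (-(N:ℝ))
        = (ascPochhammer ℝ (2*j+1)).eval (-(N:ℝ)) * (-(N:ℝ) + (2*j+1 : ℕ)) :=
      ascPochhammer_succ_eval _ _
    have hR : (ascPochhammer ℝ (2*j+1+1)).eval (-((N:ℝ)+1))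
        = (-((N:ℝ)+1)) * (ascPochhammer ℝ (2*j+1)).eval (-((N:ℝ)+1)+1) := by
      rw [ascPochhammer_succ_left]
      simp [eval_comp]
    have e2 : -((N:ℝ)+1) + 1 = -(N:ℝ) := by ring
    rw [e2] at hR
    rw [e1, hL, hR]
    push_cast
    ring

lemma key (α β : ℝ) (N k : ℕ) (_h2k : 2*k ≤ N + 1)
    (hZ : (ascPochhammer ℝ (2*k)).eval (α+1) ≠ 0) :
    (((N:ℝ)+1) + α) * cc α (β+1) N k = (((N:ℝ)+1) - 2*k) * cc α β (N+1) k := by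
  have hb : ((N:ℝ) + α + (β+1) + 1) = (((N+1 : ℕ)):ℝ) + α + β + 1 := by push_cast; ring
  have hN : (((N+1 : ℕ)):ℝ) = (N:ℝ)+1 := by push_cast; ring
  simp only [cc, Bc, hb, hN, ascPochhammer_succ_eval, Nat.factorial_succ]
  have hfN : ((N.factorial:ℝ)) ≠ 0 := Nat.cast_ne_zero.2 N.factorial_ne_zero
  have hf2k : (((2*k).factorial:ℝ)) ≠ 0 := Nat.cast_ne_zero.2 (2*k).factorial_ne_zero
  have hP := poch_shift N k
  set A1 := eval (α+1) (ascPochhammer ℝ N) with hA1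
  set Z := eval (α+1) (ascPochhammer ℝ (2*k)) with hZdef
  set Y := eval ((N:ℝ)+1+α+β+1) (ascPochhammer ℝ (2*k)) with hY
  set P := eval (-(N:ℝ)) (ascPochhammer ℝ (2*k)) with hPdef
  set Q := eval (-((N:ℝ)+1)) (ascPochhammer ℝ (2*k)) with hQ
  field_simp
  push_cast
  linear_combination ((N:ℝ)+1+α) * A1 * Y * (N.factorial : ℝ) * hP


end PhiAux

/-- All complex zeros of `p` are real (i.e. `p` splits over `ℝ`). -/
def RealRooted (p : Polynomial ℝ) : Prop := (p.roots.card : ℕ) = p.natDegree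

/-- All zeros of `p` are real and simple. -/
def AllRealSimple (p : Polynomial ℝ) : Prop := RealRooted p ∧ p.roots.Nodup

/-- Zeros of `g` and `h` interlace strictly. -/
def StrictlyInterlacing (g h : Polynomial ℝ) : Prop :=
  AllRealSimple g ∧ AllRealSimple h ∧
  (∀ x : ℝ, ¬(g.IsRoot x ∧ h.IsRoot x)) ∧
  (∀ x y : ℝ, g.IsRoot x → g.IsRoot y → x < y →
      (∀ t : ℝ, g.IsRoot t → ¬(x < t ∧ t < y)) →
      ∃! z : ℝ, h.IsRoot z ∧ x < z ∧ z < y) ∧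
  (∀ x y : ℝ, h.IsRoot x → h.IsRoot y → x < y →
      (∀ t : ℝ, h.IsRoot t → ¬(x < t ∧ t < y)) →
      ∃! z : ℝ, g.IsRoot z ∧ x < z ∧ z < y)

/-- `(g,h)` is a real pair: every real combination has only real zeros.
This is equivalent to non-strict interlacing of the zeros. -/
def RealPair (g h : Polynomial ℝ) : Prop :=
  ∀ a b : ℝ, RealRooted (C a * g + C b * h)

/-- The zero of `p` closest to the origin, when all zeros of `p` are negative. -/
noncomputable def maxRoot (p : Polynomial ℝ) : ℝ := sSup {x : ℝ | p.IsRoot x}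

/-- `f` is Hurwitz stable: all complex zeros lie in the open left half-plane. -/
def HurwitzStable (f : Polynomial ℝ) : Prop :=
  ∀ z : ℂ, Polynomial.aeval z f = 0 → z.re < 0

/-- `(n+α)·φ_{n−1}^{(α,β+1)}(μ) = n·φ_n^{(α,β)}(μ) − 2μ·(φ_n^{(α,β)})'(μ)`. -/
theorem phi_derivative_rel_down (α β : ℝ) (n : ℕ) (hn : 1 ≤ n)
    (hα : ∀ k ≤ n, (ascPochhammer ℝ k).eval (α + 1) ≠ 0) :
    C ((n : ℝ) + α) * phi α (β + 1) (n - 1) =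
      C (n : ℝ) * phi α β n - C (2 : ℝ) * X * Polynomial.derivative (phi α β n) := by
  obtain ⟨N, rfl⟩ : ∃ N, n = N + 1 := ⟨n - 1, by omega⟩
  simp only [Nat.add_sub_cancel]
  rw [phi_eq, phi_eq]
  ext m
  rw [mul_assoc (C (2:ℝ))]
  simp only [coeff_sub, coeff_C_mul, sum_coeff]
  cases m with
  | zero =>
    rw [mul_coeff_zero]
    simp only [coeff_X, zero_mul, mul_zero, sub_zero, if_pos (Nat.succ_pos _)]
    have hk := key α β N 0 (by omega) (hα 0 (by omega))
    push_cast at hk ⊢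
    linear_combination hk
  | succ t =>
    rw [coeff_X_mul, coeff_derivative, sum_coeff]
    by_cases c1 : t + 1 < N / 2 + 1
    · have c2 : t + 1 < (N + 1) / 2 + 1 := by omega
      rw [if_pos c1, if_pos c2]
      have hk := key α β N (t+1) (by omega) (hα (2*(t+1)) (by omega))
      push_cast at hk ⊢
      linear_combination hk
    · rw [if_neg c1]
      by_cases c2 : t + 1 < (N + 1) / 2 + 1
      · rw [if_pos c2]
        have h2 : 2 * (t + 1) = N + 1 := by omega
        have hr : ((N:ℝ) + 1) = 2 * (t:ℝ) + 2 := by exact_mod_cast congrArg (Nat.cast : ℕ → ℝ) h2.symm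
        push_cast
        linear_combination (-(cc α β (N+1) (t+1))) * hr
      · rw [if_neg c2]
        ring
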